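/- Fix a network (K, G) with fading structure π and a nonempty L ⊆ K. Then σ*_L(π) equals the optimal value of the following optimization problem: maximize Σ_{J⊆L} π_L(J)·a(J) over all x ∈ ℝ^L with x ≥ 0 and all families of reals (a(J))_{J⊆L}, (b(J))_{J⊆L} subject to: for every J ⊆ L and every vector m ∈ M_{J,L}, ⟨x, m⟩ ≥ a(J) and ⟨x, m⟩ ≤ b(J); and Σ_{J⊆L} π_L(J)·b(J) = 1. -/

import Mathlib

open scoped BigOperators
open Filter MeasureTheory ProbabilityTheory

/-- `S` is an independent set of the interference graph `G` contained in the
set of links `J` (pairwise non-adjacent links). -/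
def IsIndepIn {V : Type*} (G : SimpleGraph V) (J S : Finset V) : Prop :=
  S ⊆ J ∧ ∀ u ∈ S, ∀ v ∈ S, ¬ G.Adj u v

/-- `S` is a maximal independent set of `J`. -/
def IsMaxIndepIn {V : Type*} (G : SimpleGraph V) (J S : Finset V) : Prop :=
  IsIndepIn G J S ∧ ∀ T, IsIndepIn G J T → S ⊆ T → S = T

/-- 0/1 indicator vector of a finite set of links. -/
def indVec {V : Type*} [DecidableEq V] (S : Finset V) : V → ℝ :=
  fun v => if v ∈ S then 1 else 0

/-- `M_{J,L}` : the (finite) set of 0/1 indicator vectors of the maximal independent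
sets of `J`; the vectors are encoded in the ambient space `ℝ^V`, coordinates outside `J`
are automatically `0`. -/
def Mset {V : Type*} [DecidableEq V] (G : SimpleGraph V) (J : Finset V) : Set (V → ℝ) :=
  indVec '' {S | IsMaxIndepIn G J S}

/-- `CH(M_{J,L})` : the convex hull of `M_{J,L}`. -/
noncomputable def CHM {V : Type*} [DecidableEq V] (G : SimpleGraph V) (J : Finset V) :
    Set (V → ℝ) :=
  convexHull ℝ (Mset G J)

/-- A fading structure `π` on the set of links: nonnegative weights summing to one. -/
def IsFading {V : Type*} [Fintype V] [DecidableEq V] (π : Finset V → ℝ) : Prop :=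
  (∀ J, 0 ≤ π J) ∧ ∑ J : Finset V, π J = 1

/-- `Φ(L) = { Σ_{J ⊆ K} π(J) η_J : η_J ∈ CH(M_{J∩L,L}) }`. -/
def Phi {V : Type*} [Fintype V] [DecidableEq V] (G : SimpleGraph V) (π : Finset V → ℝ)
    (L : Finset V) : Set (V → ℝ) :=
  {φ | ∃ η : Finset V → V → ℝ, (∀ J, η J ∈ CHM G (J ∩ L)) ∧
    φ = ∑ J : Finset V, π J • η J}

/-- The fading local pooling factor `σ*_L(π)` of a set of links `L`. -/
noncomputable def sigmaL {V : Type*} [Fintype V] [DecidableEq V] (G : SimpleGraph V)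
    (π : Finset V → ℝ) (L : Finset V) : ℝ :=
  sInf {σ : ℝ | 0 ≤ σ ∧ ∃ φ1 ∈ Phi G π L, ∃ φ2 ∈ Phi G π L, ∀ v ∈ L, φ2 v ≤ σ * φ1 v}

/-- The Fading-LPF `σ*_G(π)` of the network: minimum of `σ*_L(π)` over nonempty `L ⊆ K`. -/
noncomputable def sigmaG {V : Type*} [Fintype V] [DecidableEq V] (G : SimpleGraph V)
    (π : Finset V → ℝ) : ℝ :=
  sInf (sigmaL G π '' {L : Finset V | L.Nonempty})
/-- The marginal distribution `π_L` induced on a subset of links `L`. -/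
noncomputable def marginal {V : Type*} [Fintype V] [DecidableEq V] (π : Finset V → ℝ)
    (L J : Finset V) : ℝ :=
  ∑ I : Finset V, if I ∩ L = J then π I else 0

/-- `n(M_J)`: minimum cardinality of a maximal independent set of `J`. -/
noncomputable def nM {V : Type*} (G : SimpleGraph V) (J : Finset V) : ℕ :=
  sInf (Finset.card '' {S | IsMaxIndepIn G J S})

/-- `N(M_J)`: maximum cardinality of a maximal independent set of `J`. -/
noncomputable def NM {V : Type*} (G : SimpleGraph V) (J : Finset V) : ℕ :=
  sSup (Finset.card '' {S | IsMaxIndepIn G J S})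

/-- interference degree of a link `l`: maximum cardinality of an independent set of `G`
contained in the closed neighborhood of `l`. -/
noncomputable def dI {V : Type*} (G : SimpleGraph V) (l : V) : ℕ :=
  sSup (Finset.card '' {S : Finset V | (∀ u ∈ S, ∀ v ∈ S, ¬ G.Adj u v) ∧
    ∀ v ∈ S, v = l ∨ G.Adj l v})

/-- interference degree `d_I(G)` of the whole interference graph. -/
noncomputable def dIG {V : Type*} (G : SimpleGraph V) : ℕ :=
  sSup (Set.range (dI G))

/-- interference degree `d_I(S)` of the subgraph of `G` induced on the set of links `S`. -/
noncomputable def dISet {V : Type*} (G : SimpleGraph V) (Sset : Finset V) : ℕ :=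
  sSup (Finset.card '' {T : Finset V | T ⊆ Sset ∧ (∀ u ∈ T, ∀ v ∈ T, ¬ G.Adj u v) ∧
    ∃ l ∈ Sset, ∀ v ∈ T, v = l ∨ G.Adj l v})

/-- The throughput region `Λ_f`. -/
def LambdaF {V : Type*} [Fintype V] [DecidableEq V] (G : SimpleGraph V) (π : Finset V → ℝ) :
    Set (V → ℝ) :=
  {lam | (∀ v, 0 < lam v) ∧ ∃ η : Finset V → V → ℝ,
    (∀ J, η J ∈ CHM G J) ∧ ∀ v, lam v ≤ ∑ J : Finset V, π J * η J v}

/-- The scaled region `Λ_f(x)`. -/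
def LambdaX {V : Type*} [Fintype V] [DecidableEq V] (G : SimpleGraph V) (π : Finset V → ℝ)
    (x : Finset V → ℝ) : Set (V → ℝ) :=
  {lam | (∀ v, 0 < lam v) ∧ ∃ η : Finset V → V → ℝ,
    (∀ J, η J ∈ CHM G J) ∧ ∀ v, lam v ≤ ∑ J : Finset V, x J * π J * η J v}

/-- The standard (non-fading) local pooling factor of a graph `H`. -/
noncomputable def stdLPF (W : Type*) [Fintype W] [DecidableEq W] (H : SimpleGraph W) : ℝ :=
  sInf ((fun L => sInf {σ : ℝ | 0 ≤ σ ∧ ∃ φ1 ∈ CHM H L, ∃ φ2 ∈ CHM H L,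
    ∀ v ∈ L, φ2 v ≤ σ * φ1 v}) '' {L : Finset W | L.Nonempty})

/-- discrete measurable structure on global channel states -/
instance {α : Type*} : MeasurableSpace (Finset α) := ⊤

/-- The queue-length process `Q` evolves according to
`Q_l[t+1] = (Q_l[t] − C_l[t]·1{l ∈ S[t]})⁺ + A_l[t]`, `Q_l[0] = 0`,
where `GS t ω` is the set of 'ON' links and `S t ω` is the schedule. -/
def QueueEvol {V : Type*} [DecidableEq V] {Ω : Type*} (A : ℕ → V → Ω → ℕ)
    (GS S : ℕ → Ω → Finset V) (Q : ℕ → V → Ω → ℕ) : Prop :=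
  (∀ l ω, Q 0 l ω = 0) ∧
  ∀ t l ω, Q (t + 1) l ω =
    (Q t l ω - (if l ∈ GS t ω ∧ l ∈ S t ω then 1 else 0)) + A t l ω

/-- `S` is a greedy maximal schedule for the weights `w`: a maximal independent set of `G`
with an enumeration `s_0, …, s_{k-1}` such that each `s_i` has maximal weight among the
links neither equal nor adjacent to any of `s_0, …, s_{i-1}`. -/
def IsGreedySchedule {V : Type*} [Fintype V] [DecidableEq V] (G : SimpleGraph V)
    (w : V → ℝ) (S : Finset V) : Prop :=
  IsMaxIndepIn G Finset.univ S ∧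
  ∃ s : ℕ → V, S = (Finset.range S.card).image s ∧
    (∀ i < S.card, ∀ j < S.card, s i = s j → i = j) ∧
    ∀ i < S.card, ∀ v : V, (∀ j < i, v ≠ s j ∧ ¬ G.Adj v (s j)) → w v ≤ w (s i)

/-- A GMS policy: at every time and in every sample point, the schedule is a greedy
maximal schedule for the weights `w_l = Q_l[t]·C_l[t]`. -/
def IsGMSPolicy {V : Type*} [Fintype V] [DecidableEq V] {Ω : Type*} (G : SimpleGraph V)
    (GS S : ℕ → Ω → Finset V) (Q : ℕ → V → Ω → ℕ) : Prop :=
  ∀ t ω, IsGreedySchedule G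
    (fun l => (Q t l ω : ℝ) * (if l ∈ GS t ω then 1 else 0)) (S t ω)

section AuxLemmas

variable {V : Type*} [Fintype V] [DecidableEq V]

lemma exists_maxIndepIn (G : SimpleGraph V) (J : Finset V) : ∃ S, IsMaxIndepIn G J S := by
  classical
  obtain ⟨S, hS, hmax⟩ := Finset.exists_max_image
    (J.powerset.filter fun S => ∀ u ∈ S, ∀ v ∈ S, ¬ G.Adj u v) Finset.card
    ⟨∅, by simp⟩
  simp only [Finset.mem_filter, Finset.mem_powerset] at hS
  refine ⟨S, ⟨hS.1, hS.2⟩, ?_⟩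
  intro T hT hST
  refine Finset.eq_of_subset_of_card_le hST (hmax T ?_)
  simp only [Finset.mem_filter, Finset.mem_powerset]
  exact ⟨hT.1, hT.2⟩

lemma Mset_nonempty (G : SimpleGraph V) (J : Finset V) : (Mset G J).Nonempty := by
  obtain ⟨S, hS⟩ := exists_maxIndepIn G J
  exact ⟨indVec S, S, hS, rfl⟩

lemma Mset_finite (G : SimpleGraph V) (J : Finset V) : (Mset G J).Finite :=
  (Set.toFinite _).image _

lemma Mset_props (G : SimpleGraph V) {J : Finset V} {m : V → ℝ} (hm : m ∈ Mset G J) :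
    (∀ v, 0 ≤ m v) ∧ ∀ v ∉ J, m v = 0 := by
  obtain ⟨S, hS, rfl⟩ := hm
  constructor
  · intro v; unfold indVec; split <;> norm_num
  · intro v hv
    have hvS : v ∉ S := fun h => hv (hS.1.1 h)
    unfold indVec; simp [hvS]

lemma CHM_props (G : SimpleGraph V) (J : Finset V) :
    CHM G J ⊆ {y : V → ℝ | (∀ v, 0 ≤ y v) ∧ ∀ v ∉ J, y v = 0} := by
  apply convexHull_min
  · intro m hm; exact Mset_props G hm
  · intro y hy z hz α β hα hβ hαβ
    constructor
    · intro v
      have h1 := hy.1 v; have h2 := hz.1 v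
      have : 0 ≤ α * y v + β * z v :=
        add_nonneg (mul_nonneg hα h1) (mul_nonneg hβ h2)
      simpa [Pi.add_apply, Pi.smul_apply, smul_eq_mul] using this
    · intro v hv
      simp [Pi.add_apply, Pi.smul_apply, hy.2 v hv, hz.2 v hv]

lemma inner_isLinear (x : V → ℝ) : IsLinearMap ℝ (fun y : V → ℝ => ∑ v, x v * y v) := by
  constructor
  · intro y z; simp [mul_add, Finset.sum_add_distrib]
  · intro c y
    simp only [Pi.smul_apply, smul_eq_mul, Finset.mul_sum]
    exact Finset.sum_congr rfl fun v _ => by ring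

lemma CHM_inner_ge (G : SimpleGraph V) (x : V → ℝ) {J : Finset V} {α : ℝ}
    (h : ∀ m ∈ Mset G J, α ≤ ∑ v, x v * m v) {y : V → ℝ} (hy : y ∈ CHM G J) :
    α ≤ ∑ v, x v * y v :=
  convexHull_min h (convex_halfSpace_ge (inner_isLinear x) α) hy

lemma CHM_inner_le (G : SimpleGraph V) (x : V → ℝ) {J : Finset V} {β : ℝ}
    (h : ∀ m ∈ Mset G J, ∑ v, x v * m v ≤ β) {y : V → ℝ} (hy : y ∈ CHM G J) :
    ∑ v, x v * y v ≤ β :=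
  convexHull_min h (convex_halfSpace_le (inner_isLinear x) β) hy

lemma Phi_props {G : SimpleGraph V} {π : Finset V → ℝ} (hπ : ∀ J, 0 ≤ π J) {L : Finset V}
    {φ : V → ℝ} (hφ : φ ∈ Phi G π L) : ∀ v, 0 ≤ φ v ∧ (v ∉ L → φ v = 0) := by
  obtain ⟨η, hη, rfl⟩ := hφ
  intro v
  rw [Finset.sum_apply]
  constructor
  · refine Finset.sum_nonneg fun J _ => ?_
    have := (CHM_props G (J ∩ L) (hη J)).1 v
    simpa [Pi.smul_apply, smul_eq_mul] using mul_nonneg (hπ J) this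
  · intro hv
    refine Finset.sum_eq_zero fun J _ => ?_
    have : η J v = 0 := (CHM_props G (J ∩ L) (hη J)).2 v (by simp [hv])
    simp [Pi.smul_apply, this]

lemma Phi_nonempty (G : SimpleGraph V) (π : Finset V → ℝ) (L : Finset V) :
    (Phi G π L).Nonempty := by
  choose m hm using fun J : Finset V => Mset_nonempty G (J ∩ L)
  exact ⟨_, m, fun J => subset_convexHull ℝ _ (hm J), rfl⟩

lemma Phi_eq_image (G : SimpleGraph V) (π : Finset V → ℝ) (L : Finset V) :
    Phi G π L = (fun η : Finset V → V → ℝ => ∑ J, π J • η J) ''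
      Set.univ.pi (fun J => CHM G (J ∩ L)) := by
  ext φ
  constructor
  · rintro ⟨η, h1, rfl⟩
    exact ⟨η, fun J _ => h1 J, rfl⟩
  · rintro ⟨η, h1, rfl⟩
    exact ⟨η, fun J => h1 J (Set.mem_univ J), rfl⟩

lemma Phi_isCompact (G : SimpleGraph V) (π : Finset V → ℝ) (L : Finset V) :
    IsCompact (Phi G π L) := by
  rw [Phi_eq_image]
  exact (isCompact_univ_pi fun J => (Mset_finite G (J ∩ L)).isCompact_convexHull (𝕜 := ℝ)).image
    (continuous_finset_sum _ fun J _ => (continuous_apply J).const_smul (π J))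

lemma Phi_convex (G : SimpleGraph V) (π : Finset V → ℝ) (L : Finset V) :
    Convex ℝ (Phi G π L) := by
  rw [Phi_eq_image]
  refine Convex.is_linear_image (convex_pi fun J _ => convex_convexHull ℝ _) ?_
  constructor
  · intro η η'; simp [smul_add, Finset.sum_add_distrib]
  · intro c η
    rw [Finset.smul_sum]
    refine Finset.sum_congr rfl fun J _ => ?_
    show π J • (c • η J) = c • (π J • η J)
    exact smul_comm _ _ _

lemma regroup (π : Finset V → ℝ) (L : Finset V) (c : Finset V → ℝ) :
    ∑ J ∈ L.powerset, marginal π L J * c J = ∑ I : Finset V, π I * c (I ∩ L) := by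
  unfold marginal
  simp only [Finset.sum_mul, ite_mul, zero_mul]
  rw [Finset.sum_comm]
  refine Finset.sum_congr rfl fun I _ => ?_
  rw [Finset.sum_ite_eq L.powerset (I ∩ L) (fun J => π I * c J)]
  simp [Finset.inter_subset_right]

lemma marginal_nonneg {π : Finset V → ℝ} (hπ : ∀ J, 0 ≤ π J) (L J : Finset V) :
    0 ≤ marginal π L J := by
  refine Finset.sum_nonneg fun I _ => ?_
  split <;> simp [hπ I]

lemma marginal_sum {π : Finset V → ℝ} (hπ2 : ∑ J : Finset V, π J = 1) (L : Finset V) :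
    ∑ J ∈ L.powerset, marginal π L J = 1 := by
  have h := regroup π L (fun _ => 1)
  simpa [hπ2] using h

lemma innerSumAux (x : V → ℝ) (π : Finset V → ℝ) (η : Finset V → V → ℝ) :
    ∑ v, x v * (∑ I : Finset V, π I • η I) v = ∑ I : Finset V, π I * ∑ v, x v * η I v := by
  simp only [Finset.sum_apply, Pi.smul_apply, smul_eq_mul, Finset.mul_sum]
  rw [Finset.sum_comm]
  exact Finset.sum_congr rfl fun I _ => Finset.sum_congr rfl fun v _ => by ring

lemma weak_duality {G : SimpleGraph V} {π : Finset V → ℝ} (hπ : IsFading π) {L : Finset V}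
    {x : V → ℝ} {a b : Finset V → ℝ}
    (hx : ∀ v, 0 ≤ x v)
    (hab : ∀ J ∈ L.powerset, ∀ m ∈ Mset G J,
      a J ≤ ∑ v : V, x v * m v ∧ ∑ v : V, x v * m v ≤ b J)
    (hb1 : ∑ J ∈ L.powerset, marginal π L J * b J = 1)
    {σ : ℝ} (hσ : 0 ≤ σ) {φ1 φ2 : V → ℝ} (hφ1 : φ1 ∈ Phi G π L) (hφ2 : φ2 ∈ Phi G π L)
    (hle : ∀ v ∈ L, φ2 v ≤ σ * φ1 v) :
    ∑ J ∈ L.powerset, marginal π L J * a J ≤ σ := by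
  classical
  have hpw : ∀ I : Finset V, I ∩ L ∈ L.powerset := fun I =>
    Finset.mem_powerset.2 Finset.inter_subset_right
  have hφ1p := Phi_props hπ.1 hφ1
  have hφ2p := Phi_props hπ.1 hφ2
  obtain ⟨η1, hη1, hφ1e⟩ := hφ1
  obtain ⟨η2, hη2, hφ2e⟩ := hφ2
  have step1 : ∑ J ∈ L.powerset, marginal π L J * a J ≤ ∑ v, x v * φ2 v := by
    rw [regroup π L a, hφ2e, innerSumAux]
    refine Finset.sum_le_sum fun I _ => mul_le_mul_of_nonneg_left ?_ (hπ.1 I)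
    exact CHM_inner_ge G x (fun m hm => (hab _ (hpw I) m hm).1) (hη2 I)
  have step2 : ∑ v, x v * φ2 v ≤ σ * ∑ v, x v * φ1 v := by
    rw [Finset.mul_sum]
    refine Finset.sum_le_sum fun v _ => ?_
    by_cases hv : v ∈ L
    · have := mul_le_mul_of_nonneg_left (hle v hv) (hx v)
      calc x v * φ2 v ≤ x v * (σ * φ1 v) := this
        _ = σ * (x v * φ1 v) := by ring
    · have h2 : φ2 v = 0 := (hφ2p v).2 hv
      have h1 : 0 ≤ φ1 v := (hφ1p v).1
      have : 0 ≤ σ * (x v * φ1 v) := mul_nonneg hσ (mul_nonneg (hx v) h1)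
      simp [h2, this]
  have step3 : ∑ v, x v * φ1 v ≤ 1 := by
    rw [hφ1e, innerSumAux, ← hb1, regroup π L b]
    refine Finset.sum_le_sum fun I _ => mul_le_mul_of_nonneg_left ?_ (hπ.1 I)
    exact CHM_inner_le G x (fun m hm => (hab _ (hpw I) m hm).2) (hη1 I)
  calc ∑ J ∈ L.powerset, marginal π L J * a J ≤ σ * ∑ v, x v * φ1 v := step1.trans step2
    _ ≤ σ * 1 := mul_le_mul_of_nonneg_left step3 hσ
    _ = σ := mul_one σ

end AuxLemmas

lemma div_le_div_of_nonneg_right' {a b c : ℝ} (h : a ≤ b) (hc : 0 < c) : a / c ≤ b / c := by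
  rw [div_le_div_iff₀ hc hc]
  nlinarith

/-- **Lemma 2 (Dual characterization of the fading local pooling factor).**
`σ*_L(π)` equals the optimal value of:
maximize `Σ_{J⊆L} π_L(J) a(J)` over `x ≥ 0`, `(a(J))`, `(b(J))` subject to
`a(J) ≤ ⟨x, m⟩ ≤ b(J)` for every `J ⊆ L` and every `m ∈ M_{J,L}`, and
`Σ_{J⊆L} π_L(J) b(J) = 1`. -/
theorem flpf_dual_characterization {V : Type*} [Fintype V] [DecidableEq V]
    (G : SimpleGraph V) (π : Finset V → ℝ) (hπ : IsFading π)
    (L : Finset V) (hL : L.Nonempty) :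
    sigmaL G π L = sSup {val : ℝ |
      ∃ (x : V → ℝ) (a b : Finset V → ℝ),
        (∀ v, 0 ≤ x v) ∧
        (∀ J ∈ L.powerset, ∀ m ∈ Mset G J,
          a J ≤ ∑ v : V, x v * m v ∧ ∑ v : V, x v * m v ≤ b J) ∧
        (∑ J ∈ L.powerset, marginal π L J * b J = 1) ∧
        val = ∑ J ∈ L.powerset, marginal π L J * a J} := by
  classical
  set S : Set ℝ := {val : ℝ |
      ∃ (x : V → ℝ) (a b : Finset V → ℝ),
        (∀ v, 0 ≤ x v) ∧
        (∀ J ∈ L.powerset, ∀ m ∈ Mset G J,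
          a J ≤ ∑ v : V, x v * m v ∧ ∑ v : V, x v * m v ≤ b J) ∧
        (∑ J ∈ L.powerset, marginal π L J * b J = 1) ∧
        val = ∑ J ∈ L.powerset, marginal π L J * a J} with hSdef
  set T : Set ℝ :=
    {σ : ℝ | 0 ≤ σ ∧ ∃ φ1 ∈ Phi G π L, ∃ φ2 ∈ Phi G π L, ∀ v ∈ L, φ2 v ≤ σ * φ1 v} with hTdef
  show sInf T = sSup S
  -- basic facts
  have hOne : (1 : ℝ) ∈ T := by
    obtain ⟨φ, hφ⟩ := Phi_nonempty G π L
    exact ⟨zero_le_one, φ, hφ, φ, hφ, fun v _ => by rw [one_mul]⟩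
  have hTbdd : BddBelow T := ⟨0, fun σ hσ => hσ.1⟩
  have hZero : (0 : ℝ) ∈ S := by
    refine ⟨fun _ => 0, fun _ => 0, fun _ => 1, fun _ => le_refl 0, ?_, ?_, ?_⟩
    · intro J _ m _; simp
    · simpa using marginal_sum hπ.2 L
    · simp
  have hSbdd : BddAbove S := by
    refine ⟨1, fun val hval => ?_⟩
    obtain ⟨x, a, b, hx, hab, hb1, rfl⟩ := hval
    obtain ⟨h01, φ1, hφ1, φ2, hφ2, hle⟩ := hOne
    exact weak_duality hπ hx hab hb1 zero_le_one hφ1 hφ2 hle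
  refine le_antisymm ?_ ?_
  swap
  · -- weak duality : sSup S ≤ sInf T
    refine csSup_le ⟨0, hZero⟩ fun val hval => le_csInf ⟨1, hOne⟩ fun σ hσ => ?_
    obtain ⟨x, a, b, hx, hab, hb1, rfl⟩ := hval
    obtain ⟨hσ0, φ1, hφ1, φ2, hφ2, hle⟩ := hσ
    exact weak_duality hπ hx hab hb1 hσ0 hφ1 hφ2 hle
  -- strong duality : sInf T ≤ sSup S
  by_contra hlt
  push_neg at hlt
  set σ : ℝ := (sSup S + sInf T) / 2 with hσdef
  have hσ1 : sSup S < σ := by rw [hσdef]; linarith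
  have hσ2 : σ < sInf T := by rw [hσdef]; linarith
  have hS0 : (0 : ℝ) ≤ sSup S := le_csSup hSbdd hZero
  have hσ0 : 0 ≤ σ := le_trans hS0 hσ1.le
  have hσT : σ ∉ T := fun hmem => absurd (csInf_le hTbdd hmem) (not_le.2 hσ2)
  -- separation
  set A : Set (V → ℝ) :=
    (fun p : (V → ℝ) × (V → ℝ) => p.2 - σ • p.1) '' ((Phi G π L) ×ˢ (Phi G π L)) with hAdef
  set B : Set (V → ℝ) := {z : V → ℝ | ∀ v ∈ L, z v ≤ 0} with hBdef
  have hAconv : Convex ℝ A := by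
    refine Convex.is_linear_image ((Phi_convex G π L).prod (Phi_convex G π L)) ?_
    constructor
    · intro p q
      show (p.2 + q.2) - σ • (p.1 + q.1) = (p.2 - σ • p.1) + (q.2 - σ • q.1)
      rw [smul_add]; abel
    · intro c p
      show c • p.2 - σ • (c • p.1) = c • (p.2 - σ • p.1)
      rw [smul_sub, smul_comm]
  have hAcomp : IsCompact A :=
    ((Phi_isCompact G π L).prod (Phi_isCompact G π L)).image
      (continuous_snd.sub (continuous_fst.const_smul σ))
  have hBconv : Convex ℝ B := by
    intro z hz w hw α β hα hβ hαβ v hv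
    have h1 := hz v hv
    have h2 := hw v hv
    have : α * z v + β * w v ≤ 0 := by nlinarith
    simpa [Pi.add_apply, Pi.smul_apply, smul_eq_mul] using this
  have hBclosed : IsClosed B := by
    have : B = ⋂ v ∈ L, {z : V → ℝ | z v ≤ 0} := by ext z; simp [hBdef]
    rw [this]
    exact isClosed_biInter fun v _ => isClosed_le (continuous_apply v) continuous_const
  have hdisj : Disjoint A B := by
    rw [Set.disjoint_left]
    rintro z ⟨⟨φ1, φ2⟩, hmem, rfl⟩ hzB
    rw [Set.mem_prod] at hmem
    refine hσT ⟨hσ0, φ1, hmem.1, φ2, hmem.2, fun v hv => ?_⟩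
    have := hzB v hv
    simp only [Pi.sub_apply, Pi.smul_apply, smul_eq_mul] at this
    linarith
  obtain ⟨f, u, w, hfu, huw, hfw⟩ :=
    geometric_hahn_banach_compact_closed hAconv hAcomp hBconv hBclosed hdisj
  have h0B : (0 : V → ℝ) ∈ B := fun v _ => le_refl 0
  have hw0 : w < 0 := by have := hfw 0 h0B; simpa using this
  have hfB : ∀ z ∈ B, 0 ≤ f z := by
    intro z hz
    by_contra hneg
    push_neg at hneg
    have ht : 0 ≤ (w - 1) / f z := by
      apply le_of_lt
      apply div_pos_of_neg_of_neg (by linarith) hneg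
    have hzB : ((w - 1) / f z) • z ∈ B := by
      intro v hv
      have : ((w - 1) / f z) * z v ≤ 0 := mul_nonpos_iff.2 (Or.inl ⟨ht, hz v hv⟩)
      simpa [Pi.smul_apply, smul_eq_mul] using this
    have hc := hfw _ hzB
    rw [f.map_smul, smul_eq_mul, div_mul_cancel₀ _ (ne_of_lt hneg)] at hc
    linarith
  -- the dual vector x
  set x : V → ℝ := fun v => -f (fun j => if v = j then 1 else 0) with hxdef
  have hxrep : ∀ y : V → ℝ, ∑ v, x v * y v = -f y := by
    intro y
    have h1 : f y = ∑ v, y v * f (fun j => if v = j then 1 else 0) := by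
      conv_lhs => rw [pi_eq_sum_univ y]
      rw [map_sum]
      exact Finset.sum_congr rfl fun v _ => by rw [f.map_smul, smul_eq_mul]
    rw [h1, ← Finset.sum_neg_distrib]
    refine Finset.sum_congr rfl fun v _ => ?_
    simp only [hxdef]
    ring
  have hxpos : ∀ v, 0 ≤ x v := by
    intro v
    have hmem : (fun j => if v = j then (-1 : ℝ) else 0) ∈ B := by
      intro j _
      dsimp only
      split <;> norm_num
    have hge := hfB _ hmem
    have he : (fun j => if v = j then (-1 : ℝ) else 0)
        = -(fun j => if v = j then (1 : ℝ) else 0) := by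
      funext j; by_cases h : v = j <;> simp [h]
    rw [he, f.map_neg] at hge
    simpa [hxdef] using hge
  have hkey : ∀ φ1 ∈ Phi G π L, ∀ φ2 ∈ Phi G π L,
      σ * (∑ v, x v * φ1 v) < ∑ v, x v * φ2 v := by
    intro φ1 h1 φ2 h2
    have hA : f (φ2 - σ • φ1) < u :=
      hfu _ ⟨(φ1, φ2), Set.mem_prod.2 ⟨h1, h2⟩, rfl⟩
    rw [f.map_sub, f.map_smul, smul_eq_mul] at hA
    have e1 := hxrep φ1
    have e2 := hxrep φ2
    have hf1 : f φ1 = -∑ v, x v * φ1 v := by linarith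
    have hf2 : f φ2 = -∑ v, x v * φ2 v := by linarith
    rw [hf1, hf2] at hA
    linarith
  -- optimal primal vectors
  choose mlo hmloM hmlo using fun J : Finset V =>
    Set.exists_min_image (Mset G J) (fun m => ∑ v, x v * m v) (Mset_finite G J)
      (Mset_nonempty G J)
  choose mhi hmhiM hmhi using fun J : Finset V =>
    Set.exists_max_image (Mset G J) (fun m => ∑ v, x v * m v) (Mset_finite G J)
      (Mset_nonempty G J)
  set a : Finset V → ℝ := fun J => ∑ v, x v * mlo J v with hadef
  set b : Finset V → ℝ := fun J => ∑ v, x v * mhi J v with hbdef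
  have hφlo : (∑ I : Finset V, π I • mlo (I ∩ L)) ∈ Phi G π L :=
    ⟨fun I => mlo (I ∩ L), fun I => subset_convexHull ℝ _ (hmloM (I ∩ L)), rfl⟩
  have hφhi : (∑ I : Finset V, π I • mhi (I ∩ L)) ∈ Phi G π L :=
    ⟨fun I => mhi (I ∩ L), fun I => subset_convexHull ℝ _ (hmhiM (I ∩ L)), rfl⟩
  set Av : ℝ := ∑ J ∈ L.powerset, marginal π L J * a J with hAvdef
  set Bv : ℝ := ∑ J ∈ L.powerset, marginal π L J * b J with hBvdef
  have hlo_eq : ∑ v, x v * (∑ I : Finset V, π I • mlo (I ∩ L)) v = Av := by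
    rw [innerSumAux, hAvdef, regroup π L a]
  have hhi_eq : ∑ v, x v * (∑ I : Finset V, π I • mhi (I ∩ L)) v = Bv := by
    rw [innerSumAux, hBvdef, regroup π L b]
  have hstrict : σ * Bv < Av := by
    have := hkey _ hφhi _ hφlo
    rwa [hlo_eq, hhi_eq] at this
  have ha_nonneg : ∀ J, 0 ≤ a J := fun J =>
    Finset.sum_nonneg fun v _ => mul_nonneg (hxpos v) ((Mset_props G (hmloM J)).1 v)
  have hab_le : ∀ J, a J ≤ b J := fun J => hmlo J _ (hmhiM J)
  have hmarg : ∀ J, 0 ≤ marginal π L J := fun J => marginal_nonneg hπ.1 L J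
  have hA0 : 0 ≤ Av :=
    Finset.sum_nonneg fun J _ => mul_nonneg (hmarg J) (ha_nonneg J)
  have hAB : Av ≤ Bv :=
    Finset.sum_le_sum fun J _ => mul_le_mul_of_nonneg_left (hab_le J) (hmarg J)
  have hB0 : 0 ≤ Bv := le_trans hA0 hAB
  have hBpos : 0 < Bv := by
    rcases eq_or_lt_of_le hB0 with heq | hpos
    · exfalso
      rw [← heq, mul_zero] at hstrict
      rw [← heq] at hAB
      linarith
    · exact hpos
  -- scaled feasible point
  have hmemS : Av / Bv ∈ S := by
    refine ⟨fun v => x v / Bv, fun J => a J / Bv, fun J => b J / Bv, ?_, ?_, ?_, ?_⟩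
    · intro v; exact div_nonneg (hxpos v) hB0
    · intro J hJ m hm
      have hsum : ∑ v : V, x v / Bv * m v = (∑ v : V, x v * m v) / Bv := by
        rw [Finset.sum_div]
        exact Finset.sum_congr rfl fun v _ => by ring
      rw [hsum]
      constructor
      · exact div_le_div_of_nonneg_right' (hmlo J m hm) hBpos
      · exact div_le_div_of_nonneg_right' (hmhi J m hm) hBpos
    · calc ∑ J ∈ L.powerset, marginal π L J * (b J / Bv)
          = (∑ J ∈ L.powerset, marginal π L J * b J) / Bv := by
            rw [Finset.sum_div]
            exact Finset.sum_congr rfl fun J _ => by ring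
        _ = 1 := by rw [← hBvdef, div_self (ne_of_gt hBpos)]
    · calc Av / Bv
          = (∑ J ∈ L.powerset, marginal π L J * a J) / Bv := by rw [hAvdef]
        _ = ∑ J ∈ L.powerset, marginal π L J * (a J / Bv) := by
            rw [Finset.sum_div]
            exact Finset.sum_congr rfl fun J _ => by ring
  have hfinal : Av / Bv ≤ sSup S := le_csSup hSbdd hmemS
  have hgt : σ < Av / Bv := (lt_div_iff₀ hBpos).2 hstrict
  linarith
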